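/- Pathwise for every t ≥ 1: Y_t − Y_{t−1} = (M_t − M_{t−1})·𝒢′(S_{t−1}) − D(S_t, S_{t−1}), where D(a,b) := 𝒢(b) − 𝒢(a) + (a − b)·𝒢′(b) is the Bregman divergence of −𝒢; moreover D(S_t, S_{t−1}) ≥ 0. -/

import Mathlib

open MeasureTheory Filter Set

/-- The running maximum `S t = max_{s ≤ t} M s`. -/
noncomputable def runMax {Ω : Type*} (M : ℕ → Ω → ℝ) (t : ℕ) (ω : Ω) : ℝ :=
  (Finset.range (t + 1)).sup' (Finset.nonempty_range_iff.mpr (Nat.succ_ne_zero t))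
    (fun s => M s ω)

/-- The ultimate supremum `S_∞ = sup_t M_t`. -/
noncomputable def supAll {Ω : Type*} (M : ℕ → Ω → ℝ) (ω : Ω) : ℝ :=
  ⨆ t : ℕ, M t ω

/-- `𝒢 s = ∫_0^1 g(s/u) du`. -/
noncomputable def calG (g : ℝ → ℝ) (s : ℝ) : ℝ :=
  ∫ u in Set.Ioc (0 : ℝ) 1, g (s / u)

/-- `𝒢′ s = ∫_s^∞ (g(x) − g(s))/x² dx`. -/
noncomputable def calG' (g : ℝ → ℝ) (s : ℝ) : ℝ :=
  ∫ x in Set.Ioi s, (g x - g s) / x ^ 2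

/-- The Azéma–Yor process `Y t = 𝒢(S t) − (S t − M t)·𝒢′(S t)`. -/
noncomputable def ayProc {Ω : Type*} (g : ℝ → ℝ) (M : ℕ → Ω → ℝ) (t : ℕ) (ω : Ω) : ℝ :=
  calG g (runMax M t ω) - (runMax M t ω - M t ω) * calG' g (runMax M t ω)

/-- The Bregman divergence of `−𝒢`: `D(a,b) = 𝒢(b) − 𝒢(a) + (a − b)·𝒢′(b)`. -/
noncomputable def bregD (g : ℝ → ℝ) (a b : ℝ) : ℝ :=
  calG g b - calG g a + (a - b) * calG' g b

theorem aux_invsq_int {b : ℝ} (hb : 0 < b) : ∫ x in Ioi b, (x ^ 2)⁻¹ = b⁻¹ := by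
  have h := integral_Ioi_rpow_of_lt (a := (-2 : ℝ)) (by norm_num) hb
  rw [setIntegral_congr_fun measurableSet_Ioi (f := fun x : ℝ => x ^ (-2 : ℝ))
    (g := fun x => (x ^ 2)⁻¹)] at h
  · rw [h]
    rw [show (-2 : ℝ) + 1 = -1 by norm_num, Real.rpow_neg_one]
    field_simp
  · intro x hx
    show x ^ (-2 : ℝ) = (x ^ 2)⁻¹
    rw [Real.rpow_neg (le_of_lt (hb.trans hx)), ← Real.rpow_natCast x 2]
    norm_num

theorem aux_invsq_integrable {b : ℝ} (hb : 0 < b) :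
    IntegrableOn (fun x : ℝ => (x ^ 2)⁻¹) (Ioi b) := by
  have h := integrableOn_Ioi_rpow_of_lt (a := (-2 : ℝ)) (by norm_num) hb
  refine h.congr_fun (fun x hx => ?_) measurableSet_Ioi
  show x ^ (-2 : ℝ) = (x ^ 2)⁻¹
  rw [Real.rpow_neg (le_of_lt (hb.trans hx)), ← Real.rpow_natCast x 2]
  norm_num

theorem calG_rep (g : ℝ → ℝ) {b : ℝ} (hb : 0 < b) :
    calG g b = b * ∫ x in Ioi b, g x / x ^ 2 := by
  have himg : (fun x : ℝ => b / x) '' Ioi b = Ioo 0 1 := by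
    ext u
    constructor
    · rintro ⟨x, hx, rfl⟩
      exact ⟨div_pos hb (hb.trans hx), (div_lt_one (hb.trans hx)).mpr hx⟩
    · rintro ⟨hu0, hu1⟩
      exact ⟨b / u, by rw [mem_Ioi, lt_div_iff₀ hu0]; nlinarith,
        by field_simp⟩
  have hderiv : ∀ x ∈ Ioi b, HasDerivWithinAt (fun x : ℝ => b / x)
      (-(b / x ^ 2)) (Ioi b) x := by
    intro x hx
    have : HasDerivAt (fun x : ℝ => b / x) (b * (-(x ^ 2)⁻¹)) x := by
      simpa [div_eq_mul_inv] using (hasDerivAt_inv (ne_of_gt (hb.trans hx))).const_mul b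
    rw [show -(b / x ^ 2) = b * -(x ^ 2)⁻¹ by ring]
    exact this.hasDerivWithinAt
  have hinj : InjOn (fun x : ℝ => b / x) (Ioi b) := by
    intro x hx y hy hxy
    have hx0 := (hb.trans hx).ne'
    have hy0 := (hb.trans hy).ne'
    field_simp at hxy
    exact hxy.symm
  have key := integral_image_eq_integral_abs_deriv_smul measurableSet_Ioi
    hderiv hinj (fun u => g (b / u))
  rw [himg] at key
  have h1 : calG g b = ∫ u in Ioo (0:ℝ) 1, g (b / u) := by
    rw [calG, ← integral_Ioc_eq_integral_Ioo]
  rw [h1, key]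
  rw [← integral_const_mul]
  refine setIntegral_congr_fun measurableSet_Ioi (fun x hx => ?_)
  have hx0 : (0:ℝ) < x := hb.trans hx
  have : b / (b / x) = x := by field_simp
  rw [this]
  rw [abs_of_nonpos (neg_nonpos.mpr (by positivity : (0:ℝ) ≤ b / x^2))]
  simp only [smul_eq_mul, neg_neg]
  ring

theorem calG'_rep (g : ℝ → ℝ) {b : ℝ} (hb : 0 < b)
    (hint : IntegrableOn (fun x => g x / x ^ 2) (Ioi b)) :
    calG' g b = (∫ x in Ioi b, g x / x ^ 2) - g b / b := by
  have h2 : IntegrableOn (fun x : ℝ => g b * (x ^ 2)⁻¹) (Ioi b) :=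
    (aux_invsq_integrable hb).const_mul (g b)
  have : calG' g b = ∫ x in Ioi b, (g x / x ^ 2 - g b * (x ^ 2)⁻¹) := by
    refine setIntegral_congr_fun measurableSet_Ioi (fun x hx => ?_)
    show (g x - g b) / x ^ 2 = _
    ring
  rw [this, integral_sub hint h2, integral_const_mul, aux_invsq_int hb,
    div_eq_mul_inv]

theorem bregD_nonneg (g : ℝ → ℝ)
    (hg0 : ∀ x ∈ Set.Ioi (0 : ℝ), 0 ≤ g x)
    (hmono : MonotoneOn g (Set.Ioi 0))
    (hint : ∀ a ∈ Set.Ioi (0 : ℝ), IntegrableOn (fun x => g x / x ^ 2) (Set.Ioi a))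
    {a b : ℝ} (hb : 0 < b) (hba : b ≤ a) : 0 ≤ bregD g a b := by
  have ha : 0 < a := hb.trans_le hba
  set Ia := ∫ x in Ioi a, g x / x ^ 2 with hIa
  set J := ∫ x in Ioc b a, g x / x ^ 2 with hJ
  have hsplit : (∫ x in Ioi b, g x / x ^ 2) = J + Ia := by
    rw [← setIntegral_union (Ioc_disjoint_Ioi le_rfl) measurableSet_Ioi
      ((hint b hb).mono_set Ioc_subset_Ioi_self) (hint a ha),
      Ioc_union_Ioi_eq_Ioi hba]
  have hD : bregD g a b = a * J - (a - b) * g b / b := by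
    rw [bregD, calG_rep g hb, calG_rep g ha, calG'_rep g hb (hint b hb), hsplit]
    field_simp
    ring
  rw [hD]
  -- lower bound on J
  have hJint : IntegrableOn (fun x => g x / x ^ 2) (Ioc b a) :=
    (hint b hb).mono_set Ioc_subset_Ioi_self
  have hcint : IntegrableOn (fun x : ℝ => g b * (x ^ 2)⁻¹) (Ioc b a) :=
    ((aux_invsq_integrable hb).mono_set Ioc_subset_Ioi_self).const_mul (g b)
  have hgb0 : 0 ≤ g b := hg0 b hb
  have hcval : (∫ x in Ioc b a, g b * (x ^ 2)⁻¹) = g b * (b⁻¹ - a⁻¹) := by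
    rw [integral_const_mul]
    congr 1
    have h0 : (0:ℝ) ∉ Set.uIcc b a := by
      rw [Set.uIcc_of_le hba]
      intro h
      exact absurd (h.1) (not_le.mpr hb)
    have := integral_zpow (a := b) (b := a)
      (n := -2) (Or.inr ⟨by norm_num, h0⟩)
    rw [intervalIntegral.integral_of_le hba] at this
    rw [setIntegral_congr_fun measurableSet_Ioc
      (f := fun x : ℝ => (x ^ 2)⁻¹) (g := fun x : ℝ => x ^ (-2 : ℤ))]
    · rw [this]
      have : (-2 : ℤ) + 1 = -1 := by norm_num
      rw [this]
      simp [zpow_neg]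
      ring
    · intro x hx
      show (x ^ 2)⁻¹ = x ^ (-2 : ℤ)
      rw [zpow_neg, ← zpow_natCast]
      norm_num
  have hJge : g b * (b⁻¹ - a⁻¹) ≤ J := by
    rw [← hcval]
    refine setIntegral_mono_on hcint hJint measurableSet_Ioc (fun x hx => ?_)
    have hx0 : 0 < x := hb.trans hx.1
    have hgx : g b ≤ g x := hmono hb (mem_Ioi.mpr hx0) hx.1.le
    rw [div_eq_mul_inv]
    exact mul_le_mul_of_nonneg_right hgx (by positivity)
  have hid : a * (g b * (b⁻¹ - a⁻¹)) = (a - b) * g b / b := by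
    field_simp
  have := mul_le_mul_of_nonneg_left hJge ha.le
  linarith [hid ▸ this]

theorem runMax_succ {Ω : Type*} (M : ℕ → Ω → ℝ) (t : ℕ) (ω : Ω) :
    runMax M (t + 1) ω = max (runMax M t ω) (M (t + 1) ω) := by
  simp only [runMax]
  rw [Finset.sup'_congr (Finset.nonempty_range_iff.mpr (Nat.succ_ne_zero (t+1)))
    Finset.range_add_one (fun x _ => rfl), Finset.sup'_insert]
  exact sup_comm _ _

theorem runMax_ge_zeroth {Ω : Type*} (M : ℕ → Ω → ℝ) (t : ℕ) (ω : Ω) :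
    M 0 ω ≤ runMax M t ω :=
  Finset.le_sup' (f := fun s => M s ω) (Finset.mem_range.mpr (Nat.succ_pos t))

/-- Pathwise difference formula for the Azéma–Yor process. -/
theorem stmt10 {Ω : Type*} {m0 : MeasurableSpace Ω} {P : Measure Ω} [IsProbabilityMeasure P]
    (ℱ : Filtration ℕ m0) (M : ℕ → Ω → ℝ)
    (hsuper : Supermartingale M ℱ P) (hnonneg : ∀ t ω, 0 ≤ M t ω)
    (hone : ∀ ω, M 0 ω = 1)
    (g : ℝ → ℝ)
    (hg0 : ∀ x ∈ Set.Ioi (0 : ℝ), 0 ≤ g x)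
    (hmono : MonotoneOn g (Set.Ioi 0))
    (hint : ∀ a ∈ Set.Ioi (0 : ℝ), IntegrableOn (fun x => g x / x ^ 2) (Set.Ioi a)) :
    ∀ t ω,
      ayProc g M (t + 1) ω - ayProc g M t ω
          = (M (t + 1) ω - M t ω) * calG' g (runMax M t ω)
            - bregD g (runMax M (t + 1) ω) (runMax M t ω)
      ∧ 0 ≤ bregD g (runMax M (t + 1) ω) (runMax M t ω) := by
  intro t ω
  have hb1 : (1:ℝ) ≤ runMax M t ω := by
    have := runMax_ge_zeroth M t ω
    rwa [hone ω] at this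
  have hb : (0:ℝ) < runMax M t ω := lt_of_lt_of_le one_pos hb1
  have hsucc := runMax_succ M t ω
  have hba : runMax M t ω ≤ runMax M (t + 1) ω := by
    rw [hsucc]; exact le_max_left _ _
  constructor
  · rcases le_or_gt (M (t + 1) ω) (runMax M t ω) with h | h
    · have heq : runMax M (t + 1) ω = runMax M t ω := by
        rw [hsucc, max_eq_left h]
      simp only [ayProc, bregD, heq]
      ring
    · have heq : runMax M (t + 1) ω = M (t + 1) ω := by
        rw [hsucc, max_eq_right h.le]
      simp only [ayProc, bregD, heq]
      ring
  · exact bregD_nonneg g hg0 hmono hint hb hba
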